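/- Let Y^T and Y^C be real random variables such that Y^T is stochastically dominated by Y^C (i.e., P(Y^T ≤ y) ≥ P(Y^C ≤ y) for all y), and let A be Bernoulli(1/2) independent of (Y^T, Y^C). Define Y = A·Y^T + (1-A)·Y^C. Then for any fixed real constant m, P((A - 1/2)(Y - m) > 0) ≤ 1/2. -/
import Mathlib


open MeasureTheory ProbabilityTheory
open scoped ENNReal

/-- If `Y^T` is stochastically dominated by `Y^C`, `A` is Bernoulli(1/2) independent of
the pair `(Y^T, Y^C)`, and `Y = A·Y^T + (1-A)·Y^C`, then for any fixed real `m`,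
`P((A - 1/2)(Y - m) > 0) ≤ 1/2`. -/
theorem stmt_2 {Ω : Type*} [MeasurableSpace Ω] (μ : Measure Ω) [IsProbabilityMeasure μ]
    (YT YC A : Ω → ℝ) (hYT : Measurable YT) (hYC : Measurable YC) (hA : Measurable A)
    (hdom : ∀ y : ℝ, μ {ω | YC ω ≤ y} ≤ μ {ω | YT ω ≤ y})
    (hA01 : ∀ ω, A ω = 0 ∨ A ω = 1)
    (hBer : μ {ω | A ω = 1} = 1/2)
    (hindep : IndepFun A (fun ω => (YT ω, YC ω)) μ)
    (Y : Ω → ℝ) (hY : ∀ ω, Y ω = A ω * YT ω + (1 - A ω) * YC ω)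
    (m : ℝ) :
    μ {ω | 0 < (A ω - 1/2) * (Y ω - m)} ≤ 1/2 := by
  set g : Ω → ℝ × ℝ := fun ω => (YT ω, YC ω) with hg
  have hgm : Measurable g := hYT.prodMk hYC
  -- rewrite the event as a disjoint union
  have hset : {ω | 0 < (A ω - 1/2) * (Y ω - m)} =
      (A ⁻¹' {1} ∩ g ⁻¹' {x | m < x.1}) ∪ (A ⁻¹' {0} ∩ g ⁻¹' {x | x.2 < m}) := by
    ext ω
    simp only [Set.mem_setOf_eq, Set.mem_union, Set.mem_inter_iff, Set.mem_preimage,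
      Set.mem_singleton_iff, hY ω, hg]
    rcases hA01 ω with h0 | h1
    · rw [h0]
      constructor
      · intro h; right; exact ⟨rfl, by nlinarith⟩
      · rintro (⟨h, -⟩ | ⟨-, h⟩)
        · norm_num at h
        · nlinarith
    · rw [h1]
      constructor
      · intro h; left; exact ⟨rfl, by nlinarith⟩
      · rintro (⟨-, h⟩ | ⟨h, -⟩)
        · nlinarith
        · norm_num at h
  have hm1 : MeasurableSet ({x : ℝ × ℝ | m < x.1}) :=
    measurableSet_lt measurable_const measurable_fst
  have hm2 : MeasurableSet ({x : ℝ × ℝ | x.2 < m}) :=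
    measurableSet_lt measurable_snd measurable_const
  have hind1 := hindep.measure_inter_preimage_eq_mul ({1} : Set ℝ) _
    (measurableSet_singleton 1) hm1
  have hind0 := hindep.measure_inter_preimage_eq_mul ({0} : Set ℝ) _
    (measurableSet_singleton 0) hm2
  have hA0 : μ (A ⁻¹' {0}) = 1/2 := by
    have hcompl : A ⁻¹' {0} = (A ⁻¹' {1})ᶜ := by
      ext ω; rcases hA01 ω with h | h <;> simp [h]
    have hA1 : μ (A ⁻¹' {1}) = 1/2 := hBer
    rw [hcompl, measure_compl (hA (measurableSet_singleton 1)) (measure_ne_top μ _), hA1,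
      measure_univ]
    exact ENNReal.sub_eq_of_eq_add (by norm_num) (ENNReal.add_halves 1).symm
  have hA1 : μ (A ⁻¹' {1}) = 1/2 := hBer
  have hdisj : Disjoint (A ⁻¹' {1} ∩ g ⁻¹' {x | m < x.1})
      (A ⁻¹' {0} ∩ g ⁻¹' {x | x.2 < m}) := by
    apply Set.disjoint_left.mpr
    rintro ω ⟨h1, -⟩ ⟨h0, -⟩
    simp only [Set.mem_preimage, Set.mem_singleton_iff] at h1 h0
    rw [h0] at h1; norm_num at h1
  rw [hset, measure_union hdisj ((hA (measurableSet_singleton 0)).inter (hgm hm2)),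
    hind1, hind0, hA1, hA0]
  -- now: 1/2 * p + 1/2 * q ≤ 1/2 where p + q ≤ 1
  have hp : μ (g ⁻¹' {x | m < x.1}) + μ (g ⁻¹' {x | x.2 < m}) ≤ 1 := by
    have h1 : g ⁻¹' {x | m < x.1} = {ω | YT ω ≤ m}ᶜ := by
      ext ω; simp [hg, not_le]
    have h2 : μ (g ⁻¹' {x | x.2 < m}) ≤ μ {ω | YT ω ≤ m} := by
      refine le_trans (le_trans (measure_mono ?_) (hdom m)) le_rfl
      intro ω h
      simp only [Set.mem_preimage, Set.mem_setOf_eq, hg] at h ⊢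
      exact h.le
    calc μ (g ⁻¹' {x | m < x.1}) + μ (g ⁻¹' {x | x.2 < m})
        ≤ μ {ω | YT ω ≤ m}ᶜ + μ {ω | YT ω ≤ m} := by
          rw [h1]; exact add_le_add le_rfl h2
      _ = 1 := by
          rw [measure_compl (measurableSet_le hYT measurable_const) (measure_ne_top μ _),
            measure_univ, tsub_add_cancel_of_le prob_le_one]
  calc (1/2 : ℝ≥0∞) * μ (g ⁻¹' {x | m < x.1}) + 1/2 * μ (g ⁻¹' {x | x.2 < m})
      = 1/2 * (μ (g ⁻¹' {x | m < x.1}) + μ (g ⁻¹' {x | x.2 < m})) := by ring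
    _ ≤ 1/2 * 1 := by exact mul_le_mul_right hp _
    _ = 1/2 := mul_one _
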